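/- Let x ∈ ∂J*(−A*y) and x̄ ∈ ∂J*(−A*ȳ) with Ax̄ = f. Then ⟨Ax − f, y − ȳ⟩ = −(D^{−A*ȳ}(x, x̄) + D^{−A*y}(x̄, x)), i.e., the inner product of the dual velocity with y − ȳ equals minus the symmetric Bregman distance. -/
import Mathlib


open Set MeasureTheory

noncomputable section

notation "⟪" x ", " y "⟫" => @inner ℝ _ _ x y

/-- `u` is a subgradient of the convex function `J` at `x`. -/
def HasSubgrad {p : ℕ} (J : EuclideanSpace ℝ (Fin p) → ℝ) (u x : EuclideanSpace ℝ (Fin p)) :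
    Prop :=
  ∀ z, J x + ⟪u, z - x⟫ ≤ J z

/-- Bregman divergence `D^u(x₁,x₂) = J(x₁) - J(x₂) - ⟨u, x₁ - x₂⟩` (for `u ∈ ∂J(x₂)`). -/
def Breg {p : ℕ} (J : EuclideanSpace ℝ (Fin p) → ℝ) (u x₁ x₂ : EuclideanSpace ℝ (Fin p)) : ℝ :=
  J x₁ - J x₂ - ⟪u, x₁ - x₂⟫
/-- For `x ∈ ∂J*(-A*y)` (equivalently `-A*y ∈ ∂J(x)`) and a primal-dual solution `(x̄, ȳ)`,
the inner product of the dual velocity `Ax - f` with `y - ȳ` equals minus the symmetric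
Bregman distance. -/
theorem dual_velocity_inner_eq_neg_symmetric_bregman {p d : ℕ}
    (A : EuclideanSpace ℝ (Fin p) →L[ℝ] EuclideanSpace ℝ (Fin d))
    (J : EuclideanSpace ℝ (Fin p) → ℝ) (f : EuclideanSpace ℝ (Fin d))
    (x xb : EuclideanSpace ℝ (Fin p)) (y yb : EuclideanSpace ℝ (Fin d))
    (hx : HasSubgrad J (-(ContinuousLinearMap.adjoint A y)) x)
    (hxb : HasSubgrad J (-(ContinuousLinearMap.adjoint A yb)) xb)
    (hfeas : A xb = f) :
    ⟪A x - f, y - yb⟫ =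
      -(Breg J (-(ContinuousLinearMap.adjoint A yb)) x xb +
        Breg J (-(ContinuousLinearMap.adjoint A y)) xb x) := by
  subst hfeas
  simp only [Breg, inner_neg_left, inner_sub_left, inner_sub_right,
    ContinuousLinearMap.adjoint_inner_left]
  rw [real_inner_comm (A x) y, real_inner_comm (A xb) y,
    real_inner_comm (A x) yb, real_inner_comm (A xb) yb]
  ring
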